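/- The maximum cut value of a weighted graph equals half the supremum of F(x) = I(x)/‖x‖_∞ over all nonzero x ∈ ℝ^n, i.e., max_{S⊆V} cut(S) = (1/2) max_{x ∈ ℝ^n \setminus \{0\}} F(x). -/
import Mathlib


open Finset

noncomputable def cutVal {n : ℕ} (w : Fin n → Fin n → ℝ) (S : Finset (Fin n)) : ℝ :=
  ∑ i ∈ S, ∑ j ∈ Sᶜ, w i j

noncomputable def Ifun {n : ℕ} (w : Fin n → Fin n → ℝ) (x : Fin n → ℝ) : ℝ :=
  (1 / 2) * ∑ i, ∑ j, w i j * |x i - x j|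

lemma Ifun_smul {n : ℕ} (w : Fin n → Fin n → ℝ) (c : ℝ) (hc : 0 ≤ c) (x : Fin n → ℝ) :
    Ifun w (c • x) = c * Ifun w x := by
  unfold Ifun
  have h : ∀ i : Fin n, ∑ j, w i j * |(c • x) i - (c • x) j| = c * ∑ j, w i j * |x i - x j| := by
    intro i
    rw [Finset.mul_sum]
    refine Finset.sum_congr rfl fun j _ => ?_
    simp only [Pi.smul_apply, smul_eq_mul]
    rw [← mul_sub, abs_mul, abs_of_nonneg hc]
    ring
  simp_rw [h]
  rw [← Finset.mul_sum]
  ring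

lemma Ifun_pm {n : ℕ} (w : Fin n → Fin n → ℝ) (hsym : ∀ i j, w i j = w j i)
    (S : Finset (Fin n)) :
    Ifun w (fun i => if i ∈ S then (1:ℝ) else -1) = 2 * cutVal w S := by
  set x : Fin n → ℝ := fun i => if i ∈ S then (1:ℝ) else -1 with hx
  have hSS : ∀ i ∈ S, ∀ j ∈ S, w i j * |x i - x j| = 0 := by
    intro i hi j hj; simp [hx, hi, hj]
  have hSC : ∀ i ∈ S, ∀ j ∈ Sᶜ, w i j * |x i - x j| = 2 * w i j := by
    intro i hi j hj; rw [Finset.mem_compl] at hj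
    simp only [hx, if_pos hi, if_neg hj]
    norm_num
    ring
  have hCS : ∀ i ∈ Sᶜ, ∀ j ∈ S, w i j * |x i - x j| = 2 * w i j := by
    intro i hi j hj; rw [Finset.mem_compl] at hi
    simp only [hx, if_neg hi, if_pos hj]
    norm_num
    ring
  have hCC : ∀ i ∈ Sᶜ, ∀ j ∈ Sᶜ, w i j * |x i - x j| = 0 := by
    intro i hi j hj; rw [Finset.mem_compl] at hi hj
    simp [hx, hi, hj]
  have key : ∑ i, ∑ j, w i j * |x i - x j| = 4 * cutVal w S := by
    rw [← Finset.sum_add_sum_compl S (fun i => ∑ j, w i j * |x i - x j|)]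
    have e1 : ∑ i ∈ S, ∑ j, w i j * |x i - x j| = ∑ i ∈ S, ∑ j ∈ Sᶜ, 2 * w i j := by
      refine Finset.sum_congr rfl fun i hi => ?_
      rw [← Finset.sum_add_sum_compl S (fun j => w i j * |x i - x j|)]
      rw [Finset.sum_congr rfl (hSS i hi), Finset.sum_congr rfl (hSC i hi)]
      simp
    have e2 : ∑ i ∈ Sᶜ, ∑ j, w i j * |x i - x j| = ∑ i ∈ Sᶜ, ∑ j ∈ S, 2 * w i j := by
      refine Finset.sum_congr rfl fun i hi => ?_
      rw [← Finset.sum_add_sum_compl S (fun j => w i j * |x i - x j|)]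
      rw [Finset.sum_congr rfl (hCS i hi), Finset.sum_congr rfl (hCC i hi)]
      simp
    have e3 : ∑ i ∈ Sᶜ, ∑ j ∈ S, 2 * w i j = ∑ i ∈ S, ∑ j ∈ Sᶜ, 2 * w i j := by
      rw [Finset.sum_comm]
      exact Finset.sum_congr rfl fun i _ => Finset.sum_congr rfl fun j _ => by rw [hsym]
    rw [e1, e2, e3]
    have e4 : ∑ i ∈ S, ∑ j ∈ Sᶜ, 2 * w i j = 2 * ∑ i ∈ S, ∑ j ∈ Sᶜ, w i j := by
      rw [Finset.mul_sum]
      exact Finset.sum_congr rfl fun i _ => (Finset.mul_sum _ _ _).symm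
    rw [e4]
    unfold cutVal
    ring
  unfold Ifun
  rw [key]
  ring

lemma Ifun_update_convex {n : ℕ} (w : Fin n → Fin n → ℝ) (hnn : ∀ i j, 0 ≤ w i j)
    (x : Fin n → ℝ) (i0 : Fin n) (p q a b : ℝ) (hp : 0 ≤ p) (hq : 0 ≤ q) (hpq : p + q = 1) :
    Ifun w (Function.update x i0 (p * a + q * b)) ≤
      p * Ifun w (Function.update x i0 a) + q * Ifun w (Function.update x i0 b) := by
  set U := Function.update x i0 (p * a + q * b) with hU
  set V := Function.update x i0 a with hV
  set Z := Function.update x i0 b with hZ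
  have key : ∀ i, U i = p * V i + q * Z i := by
    intro i
    rcases eq_or_ne i i0 with rfl | h
    · simp [hU, hV, hZ]
    · simp only [hU, hV, hZ, Function.update_of_ne h]
      linear_combination (-(x i)) * hpq
  have hterm : ∀ i j : Fin n, w i j * |U i - U j| ≤
      p * (w i j * |V i - V j|) + q * (w i j * |Z i - Z j|) := by
    intro i j
    have h1 : U i - U j = p * (V i - V j) + q * (Z i - Z j) := by
      rw [key i, key j]; ring
    have h2 : |U i - U j| ≤ p * |V i - V j| + q * |Z i - Z j| := by
      rw [h1]
      calc |p * (V i - V j) + q * (Z i - Z j)| ≤ |p * (V i - V j)| + |q * (Z i - Z j)| :=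
            abs_add_le _ _
        _ = p * |V i - V j| + q * |Z i - Z j| := by
            rw [abs_mul, abs_mul, abs_of_nonneg hp, abs_of_nonneg hq]
    nlinarith [hnn i j, abs_nonneg (V i - V j), abs_nonneg (Z i - Z j)]
  have main : ∑ i, ∑ j, w i j * |U i - U j| ≤
      p * (∑ i, ∑ j, w i j * |V i - V j|) + q * (∑ i, ∑ j, w i j * |Z i - Z j|) := by
    calc ∑ i, ∑ j, w i j * |U i - U j|
        ≤ ∑ i, ∑ j, (p * (w i j * |V i - V j|) + q * (w i j * |Z i - Z j|)) :=
          Finset.sum_le_sum fun i _ => Finset.sum_le_sum fun j _ => hterm i j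
      _ = p * (∑ i, ∑ j, w i j * |V i - V j|) + q * (∑ i, ∑ j, w i j * |Z i - Z j|) := by
          simp_rw [Finset.sum_add_distrib, ← Finset.mul_sum]
  unfold Ifun
  linarith

lemma vertex_bound {n : ℕ} (w : Fin n → Fin n → ℝ) (hsym : ∀ i j, w i j = w j i)
    (hnn : ∀ i j, 0 ≤ w i j) :
    ∀ k : ℕ, ∀ x : Fin n → ℝ, (∀ i, |x i| ≤ 1) →
      (univ.filter fun i => x i ≠ 1 ∧ x i ≠ -1).card ≤ k →
      ∃ S : Finset (Fin n), Ifun w x ≤ 2 * cutVal w S := by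
  intro k
  induction k with
  | zero =>
    intro x hx hcard
    have hall : ∀ i, x i = 1 ∨ x i = -1 := by
      intro i
      by_contra h
      push_neg at h
      have hi : i ∈ univ.filter fun i => x i ≠ 1 ∧ x i ≠ -1 := by
        simp [h.1, h.2]
      have : 0 < (univ.filter fun i => x i ≠ 1 ∧ x i ≠ -1).card :=
        Finset.card_pos.mpr ⟨i, hi⟩
      omega
    refine ⟨univ.filter fun i => x i = 1, ?_⟩
    have hx' : x = fun i => if i ∈ univ.filter (fun i => x i = 1) then (1:ℝ) else -1 := by
      funext i
      rcases hall i with h | h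
      · simp [h]
      · simp only [Finset.mem_filter, Finset.mem_univ, true_and, h]
        norm_num
    have h := Ifun_pm w hsym (univ.filter fun i => x i = 1)
    rw [← hx'] at h
    rw [h]
  | succ k ih =>
    intro x hx hcard
    by_cases hle : (univ.filter fun i => x i ≠ 1 ∧ x i ≠ -1).card ≤ k
    · exact ih x hx hle
    · have hpos : 0 < (univ.filter fun i => x i ≠ 1 ∧ x i ≠ -1).card := by omega
      obtain ⟨i0, hi0⟩ := Finset.card_pos.mp hpos
      rw [Finset.mem_filter] at hi0
      set p := (x i0 + 1) / 2 with hpdef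
      set q := (1 - x i0) / 2 with hqdef
      have habs := abs_le.mp (hx i0)
      have hp : 0 ≤ p := by rw [hpdef]; linarith [habs.1]
      have hq : 0 ≤ q := by rw [hqdef]; linarith [habs.2]
      have hpq : p + q = 1 := by rw [hpdef, hqdef]; ring
      have hconv := Ifun_update_convex w hnn x i0 p q 1 (-1) hp hq hpq
      have heq : p * 1 + q * (-1) = x i0 := by rw [hpdef, hqdef]; ring
      rw [heq, Function.update_eq_self] at hconv
      -- pick t ∈ {1, -1} achieving max
      obtain ⟨t, ht1, ht2⟩ : ∃ t : ℝ, (t = 1 ∨ t = -1) ∧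
          Ifun w x ≤ Ifun w (Function.update x i0 t) := by
        set A := Ifun w (Function.update x i0 1) with hAd
        set B := Ifun w (Function.update x i0 (-1)) with hBd
        have hmax : Ifun w x ≤ max A B := by
          refine hconv.trans ?_
          calc p * A + q * B ≤ p * max A B + q * max A B :=
                add_le_add (mul_le_mul_of_nonneg_left (le_max_left A B) hp)
                  (mul_le_mul_of_nonneg_left (le_max_right A B) hq)
            _ = max A B := by rw [← add_mul, hpq, one_mul]
        rcases le_total A B with h | h
        · exact ⟨-1, Or.inr rfl, by rwa [max_eq_right h] at hmax⟩
        · exact ⟨1, Or.inl rfl, by rwa [max_eq_left h] at hmax⟩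
      set y := Function.update x i0 t with hy
      have hy1 : ∀ i, |y i| ≤ 1 := by
        intro i
        rcases eq_or_ne i i0 with rfl | h
        · rw [hy, Function.update_self]
          rcases ht1 with rfl | rfl <;> norm_num
        · rw [hy, Function.update_of_ne h]; exact hx i
      have hsub : (univ.filter fun i => y i ≠ 1 ∧ y i ≠ -1) ⊆
          (univ.filter fun i => x i ≠ 1 ∧ x i ≠ -1).erase i0 := by
        intro i hi
        rw [Finset.mem_filter] at hi
        have hne : i ≠ i0 := by
          rintro rfl
          rw [hy, Function.update_self] at hi
          rcases ht1 with rfl | rfl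
          · exact hi.2.1 rfl
          · exact hi.2.2 rfl
        rw [Finset.mem_erase]
        refine ⟨hne, ?_⟩
        rw [Finset.mem_filter]
        rw [hy, Function.update_of_ne hne] at hi
        exact ⟨Finset.mem_univ i, hi.2⟩
      have hcard' : (univ.filter fun i => y i ≠ 1 ∧ y i ≠ -1).card ≤ k := by
        have h1 := Finset.card_le_card hsub
        have h2 : ((univ.filter fun i => x i ≠ 1 ∧ x i ≠ -1).erase i0).card =
            (univ.filter fun i => x i ≠ 1 ∧ x i ≠ -1).card - 1 :=
          Finset.card_erase_of_mem (Finset.mem_filter.mpr ⟨Finset.mem_univ i0, hi0.2⟩)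
        omega
      obtain ⟨S, hS⟩ := ih y hy1 hcard'
      exact ⟨S, le_trans ht2 hS⟩

lemma Fbound {n : ℕ} (w : Fin n → Fin n → ℝ) (hsym : ∀ i j, w i j = w j i)
    (hnn : ∀ i j, 0 ≤ w i j) (x : Fin n → ℝ) (hx : x ≠ 0) :
    ∃ S : Finset (Fin n), Ifun w x / ‖x‖ ≤ 2 * cutVal w S := by
  have hM : 0 < ‖x‖ := norm_pos_iff.mpr hx
  set y := ‖x‖⁻¹ • x with hydef
  have hy : ∀ i, |y i| ≤ 1 := by
    intro i
    have h1 : ‖x i‖ ≤ ‖x‖ := norm_le_pi_norm x i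
    rw [hydef]
    simp only [Pi.smul_apply, smul_eq_mul, abs_mul, abs_inv, abs_norm]
    calc ‖x‖⁻¹ * |x i| ≤ ‖x‖⁻¹ * ‖x‖ :=
          mul_le_mul_of_nonneg_left (by rwa [Real.norm_eq_abs] at h1) (by positivity)
      _ = 1 := inv_mul_cancel₀ hM.ne'
  obtain ⟨S, hS⟩ := vertex_bound w hsym hnn
    (univ.filter fun i => y i ≠ 1 ∧ y i ≠ -1).card y hy le_rfl
  refine ⟨S, ?_⟩
  have h2 : Ifun w y = ‖x‖⁻¹ * Ifun w x := Ifun_smul w _ (by positivity) x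
  rw [div_eq_inv_mul, ← h2]
  exact hS

theorem stmt1 {n : ℕ} (hn : 0 < n) (w : Fin n → Fin n → ℝ)
    (hsym : ∀ i j, w i j = w j i) (hnn : ∀ i j, 0 ≤ w i j) :
    sSup {c : ℝ | ∃ S : Finset (Fin n), c = cutVal w S} =
      (1 / 2) * sSup {c : ℝ | ∃ x : Fin n → ℝ, x ≠ 0 ∧ c = Ifun w x / ‖x‖} := by
  set A := {c : ℝ | ∃ S : Finset (Fin n), c = cutVal w S} with hA
  set B := {c : ℝ | ∃ x : Fin n → ℝ, x ≠ 0 ∧ c = Ifun w x / ‖x‖} with hB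
  have hAeq : A = Set.range (cutVal w) := by
    ext c; simp [hA, eq_comm, Set.mem_range]
  have hAfin : A.Finite := by rw [hAeq]; exact Set.finite_range _
  have hAne : A.Nonempty := ⟨cutVal w ∅, ∅, rfl⟩
  have hAbdd : BddAbove A := hAfin.bddAbove
  -- pm vectors
  have pmfacts : ∀ S : Finset (Fin n),
      ∃ x : Fin n → ℝ, x ≠ 0 ∧ Ifun w x / ‖x‖ = 2 * cutVal w S := by
    intro S
    set x : Fin n → ℝ := fun i => if i ∈ S then (1:ℝ) else -1 with hxdef
    have hnorm1 : ∀ i, ‖x i‖ = 1 := by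
      intro i; by_cases hi : i ∈ S <;> simp [hxdef, hi]
    have hxnorm : ‖x‖ = 1 := by
      apply le_antisymm
      · exact (pi_norm_le_iff_of_nonneg zero_le_one).mpr fun i => (hnorm1 i).le
      · calc (1:ℝ) = ‖x ⟨0, hn⟩‖ := (hnorm1 _).symm
          _ ≤ ‖x‖ := norm_le_pi_norm x _
    have hx0 : x ≠ 0 := by
      intro h
      have := hxnorm
      rw [h, norm_zero] at this
      norm_num at this
    refine ⟨x, hx0, ?_⟩
    rw [hxnorm, Ifun_pm w hsym S]
    simp
  have hBne : B.Nonempty := by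
    obtain ⟨x, hx0, hxv⟩ := pmfacts ∅
    exact ⟨Ifun w x / ‖x‖, x, hx0, rfl⟩
  have hBbdd : BddAbove B := by
    refine ⟨2 * sSup A, ?_⟩
    rintro c ⟨x, hx, rfl⟩
    obtain ⟨S, hS⟩ := Fbound w hsym hnn x hx
    have h1 : cutVal w S ≤ sSup A := le_csSup hAbdd ⟨S, rfl⟩
    linarith
  apply le_antisymm
  · apply csSup_le hAne
    rintro c ⟨S, rfl⟩
    obtain ⟨x, hx0, hxv⟩ := pmfacts S
    have h1 : Ifun w x / ‖x‖ ≤ sSup B := le_csSup hBbdd ⟨x, hx0, rfl⟩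
    rw [hxv] at h1
    linarith
  · have h1 : sSup B ≤ 2 * sSup A := by
      apply csSup_le hBne
      rintro c ⟨x, hx, rfl⟩
      obtain ⟨S, hS⟩ := Fbound w hsym hnn x hx
      have h2 : cutVal w S ≤ sSup A := le_csSup hAbdd ⟨S, rfl⟩
      linarith
    linarith
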